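/- arXiv:math/0703675 — 2 statements merged into one kernel-verified Lean document; each statement's English description precedes it below -/
import Mathlib

section
/- With the notation of the deterministic setting, for every sequence of indices (jₖ)_{k≥1} in ℕ* and every n ≥ 0: ψ_{j₁} + Σ_{k=1}^{n} M_{Q_{j₁}}* M_{Q_{j₂}}* ⋯ M_{Q_{jₖ}}* ψ_{j_{k+1}} = M_{j₁}* M_{j₂}* ⋯ M_{jₙ}* ψ_{j_{n+1}} (for n = 0 the right-hand side is ψ_{j₁}). -/
open MeasureTheory Filter Matrix
open scoped BigOperators

namespace RRDO

/-- Euclidean inner product on `Fin d → ℂ`, antilinear in the first argument. -/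
noncomputable def einner {d : ℕ} (φ χ : Fin d → ℂ) : ℂ :=
  ∑ i, starRingEnd ℂ (φ i) * χ i

/-- Euclidean norm on `Fin d → ℂ`. -/
noncomputable def evnorm {d : ℕ} (v : Fin d → ℂ) : ℝ :=
  Real.sqrt (∑ i, ‖v i‖ ^ 2)

/-- The rank-one operator `|ψ⟩⟨φ|`, sending `χ` to `⟨φ, χ⟩ ψ`. -/
noncomputable def ketbra {d : ℕ} (ψ φ : Fin d → ℂ) : Matrix (Fin d) (Fin d) ℂ :=
  Matrix.of fun i j => ψ i * starRingEnd ℂ (φ j)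

/-- Operator norm of a matrix induced by the Euclidean vector norm. -/
noncomputable def opNorm {d : ℕ} (A : Matrix (Fin d) (Fin d) ℂ) : ℝ :=
  ⨆ v : {v : Fin d → ℂ // evnorm v ≤ 1}, evnorm (A.mulVec v)

/-- The spectral projection of `M` for the eigenvalue 1: the projection onto
`ker ((M-1)^d)` along `range ((M-1)^d)`. -/
noncomputable def specProj {d : ℕ} (M : Matrix (Fin d) (Fin d) ℂ) :
    Matrix (Fin d) (Fin d) ℂ :=
  letI := Classical.dec (IsCompl (LinearMap.ker ((M - 1) ^ d).mulVecLin)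
      (LinearMap.range ((M - 1) ^ d).mulVecLin))
  if h : IsCompl (LinearMap.ker ((M - 1) ^ d).mulVecLin)
      (LinearMap.range ((M - 1) ^ d).mulVecLin) then
    LinearMap.toMatrix'
      ((LinearMap.ker ((M - 1) ^ d).mulVecLin).subtype ∘ₗ
        Submodule.linearProjOfIsCompl _ _ h)
  else 0

/-- The set `M_(E)` of matrices whose spectrum meets the unit circle exactly in `{1}`,
with `1` an eigenvalue of algebraic multiplicity one. -/
def MsetE (d : ℕ) : Set (Matrix (Fin d) (Fin d) ℂ) :=
  {M | spectrum ℂ M ∩ {z : ℂ | ‖z‖ = 1} = {1} ∧ M.charpoly.rootMultiplicity 1 = 1}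

/-- `ψ(M) = P₁(M)* ψS`. -/
noncomputable def psiv {d : ℕ} (ψS : Fin d → ℂ) (A : Matrix (Fin d) (Fin d) ℂ) :
    Fin d → ℂ :=
  ((specProj A)ᴴ).mulVec ψS

/-- `M_Q = Q M Q` where `Q = 1 - |ψS⟩⟨ψ(M)|`. -/
noncomputable def MQm {d : ℕ} (ψS : Fin d → ℂ) (A : Matrix (Fin d) (Fin d) ℂ) :
    Matrix (Fin d) (Fin d) ℂ :=
  (1 - ketbra ψS (psiv ψS A)) * A * (1 - ketbra ψS (psiv ψS A))

/-- The ordered product `A 0 * A 1 * ⋯ * A (n-1)`. -/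
noncomputable def fwdProd {d : ℕ} (A : ℕ → Matrix (Fin d) (Fin d) ℂ) (n : ℕ) :
    Matrix (Fin d) (Fin d) ℂ :=
  ((List.range n).map A).prod

/-- The reversed ordered product `A (n-1) * ⋯ * A 1 * A 0`. -/
noncomputable def bwdProd {d : ℕ} (A : ℕ → Matrix (Fin d) (Fin d) ℂ) (n : ℕ) :
    Matrix (Fin d) (Fin d) ℂ :=
  (((List.range n).reverse).map A).prod

/-- `thetaSeq A ψS n` is `θ_{n+1} = A(n)* ⋯ A(1)* ψ(A 0)` (0-indexed). -/
noncomputable def thetaSeq {d : ℕ} (A : ℕ → Matrix (Fin d) (Fin d) ℂ) (ψS : Fin d → ℂ) :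
    ℕ → (Fin d → ℂ)
  | 0 => psiv ψS (A 0)
  | n + 1 => ((A (n + 1))ᴴ).mulVec (thetaSeq A ψS n)

/-- `P` is the infinite i.i.d. product measure built from `p` on sequence space. -/
def IsIIDproduct {Ω : Type*} [MeasurableSpace Ω] (p : Measure Ω)
    (P : Measure (ℕ → Ω)) : Prop :=
  ∀ (n : ℕ) (A : ℕ → Set Ω), (∀ i, MeasurableSet (A i)) →
    P {ω' : ℕ → Ω | ∀ i < n, ω' i ∈ A i} = ∏ i ∈ Finset.range n, p (A i)

/-- Entrywise expectation of a random matrix. -/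
noncomputable def Ematrix {Ω : Type*} [MeasurableSpace Ω] (p : Measure Ω) {d : ℕ}
    (M : Ω → Matrix (Fin d) (Fin d) ℂ) : Matrix (Fin d) (Fin d) ℂ :=
  Matrix.of fun i j => ∫ ω, M ω i j ∂p

/-- Entrywise expectation of a random vector. -/
noncomputable def Evec {Ω : Type*} [MeasurableSpace Ω] (p : Measure Ω) {d : ℕ}
    (v : Ω → Fin d → ℂ) : Fin d → ℂ :=
  fun i => ∫ ω, v ω i ∂p

/-- Assumption (RE) with constants `C, α`. -/
def AssumptionRE {Ω : Type*} [MeasurableSpace Ω] {d : ℕ}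
    (M : Ω → Matrix (Fin d) (Fin d) ℂ) (ψS : Fin d → ℂ)
    (P : Measure (ℕ → Ω)) (C α : ℝ) : Prop :=
  0 < C ∧ 0 < α ∧ ∃ Ωt : Set (ℕ → Ω), MeasurableSet Ωt ∧ P Ωt = 1 ∧
    ∀ ω' ∈ Ωt,
      (∃ n₀ : ℕ, ∀ n ≥ n₀,
        opNorm (fwdProd (fun i => MQm ψS (M (ω' i))) n) ≤ C * Real.exp (-α * n)) ∧
      ∀ n : ℕ, opNorm (fwdProd (fun i => MQm ψS (M (ω' i))) n) ≤ C

section Aux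

variable {d : ℕ}

lemma einner_adj (A : Matrix (Fin d) (Fin d) ℂ) (x y : Fin d → ℂ) :
    einner x (Aᴴ.mulVec y) = einner (A.mulVec x) y := by
  simp only [einner, Matrix.mulVec, dotProduct, Matrix.conjTranspose_apply,
    map_sum, _root_.map_mul, Finset.mul_sum, Finset.sum_mul, ← starRingEnd_apply]
  rw [Finset.sum_comm]
  exact Finset.sum_congr rfl fun i _ => Finset.sum_congr rfl fun j _ => by ring

lemma ketbra_mulVec (a b y : Fin d → ℂ) :
    (ketbra a b).mulVec y = einner b y • a := by
  funext i
  simp only [ketbra, Matrix.mulVec, dotProduct, Matrix.of_apply, einner,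
    Pi.smul_apply, smul_eq_mul, Finset.sum_mul, Finset.mul_sum]
  exact Finset.sum_congr rfl fun j _ => by ring

lemma conjTranspose_ketbra (a b : Fin d → ℂ) : (ketbra a b)ᴴ = ketbra b a := by
  ext i j
  simp only [ketbra, Matrix.conjTranspose_apply, Matrix.of_apply, _root_.map_mul,
    RingHomCompTriple.comp_apply, RingHom.id_apply, ← starRingEnd_apply, Complex.conj_conj]
  ring

lemma mulVecLin_pow (M : Matrix (Fin d) (Fin d) ℂ) (k : ℕ) :
    (M ^ k).mulVecLin = M.mulVecLin ^ k := by
  induction k with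
  | zero => rw [pow_zero, pow_zero, Matrix.mulVecLin_one]; rfl
  | succ n ih => rw [pow_succ, pow_succ, Matrix.mulVecLin_mul, ih]; rfl

end Aux

section Contr

variable {d : ℕ} (M : Matrix (Fin d) (Fin d) ℂ) (ψS : Fin d → ℂ)
  (Nm : (Fin d → ℂ) → ℝ)
  (hNm0 : ∀ x, Nm x = 0 ↔ x = 0)
  (hNmadd : ∀ x y, Nm (x + y) ≤ Nm x + Nm y)
  (hNmsmul : ∀ (c : ℂ) (x : Fin d → ℂ), Nm (c • x) = ‖c‖ * Nm x)
  (hcontr : ∀ x, Nm (M.mulVec x) ≤ Nm x)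

include hNm0 hNmadd hNmsmul in
lemma Nm_nonneg (x : Fin d → ℂ) : 0 ≤ Nm x := by
  have h0 : Nm 0 = 0 := (hNm0 0).2 rfl
  have hneg : Nm (-x) = Nm x := by
    have : (-x : Fin d → ℂ) = (-1 : ℂ) • x := by funext i; simp
    rw [this, hNmsmul]; simp
  have := hNmadd x (-x)
  rw [add_neg_cancel, h0, hneg] at this
  linarith

include hNm0 hNmadd hNmsmul hcontr in
lemma ker_g_sq (hfix : M.mulVec ψS = ψS) (v : Fin d → ℂ)
    (h2 : (M - 1).mulVecLin ((M - 1).mulVecLin v) = 0) :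
    (M - 1).mulVecLin v = 0 := by
  by_contra hw
  set w : Fin d → ℂ := (M - 1).mulVecLin v with hwdef
  have hgv : w = M.mulVec v - v := by
    simp [hwdef, Matrix.mulVecLin_apply, Matrix.sub_mulVec, Matrix.one_mulVec]
  have hMw : M.mulVec w = w := by
    have h2' : M.mulVec w - w = 0 := by
      simpa [Matrix.mulVecLin_apply, Matrix.sub_mulVec, Matrix.one_mulVec] using h2
    exact sub_eq_zero.mp h2'
  have hMv : M.mulVec v = v + w := by rw [hgv]; abel
  have hpow : ∀ n : ℕ, (M ^ n).mulVec v = v + (n : ℂ) • w := by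
    intro n
    induction n with
    | zero => simp [Matrix.one_mulVec]
    | succ n ih =>
        rw [pow_succ', ← Matrix.mulVec_mulVec, ih, Matrix.mulVec_add, Matrix.mulVec_smul,
          hMv, hMw]
        push_cast
        rw [add_smul, one_smul]
        abel
  have hNpow : ∀ n : ℕ, Nm ((M ^ n).mulVec v) ≤ Nm v := by
    intro n
    induction n with
    | zero => simp [Matrix.one_mulVec]
    | succ n ih =>
        rw [pow_succ', ← Matrix.mulVec_mulVec]
        exact le_trans (hcontr _) ih
  have hwpos : 0 < Nm w := by
    rcases lt_or_eq_of_le (Nm_nonneg Nm hNm0 hNmadd hNmsmul w) with h | h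
    · exact h
    · exact absurd ((hNm0 w).mp h.symm) hw
  have hbound : ∀ n : ℕ, (n : ℝ) * Nm w ≤ 2 * Nm v := by
    intro n
    have h1 : Nm ((n : ℂ) • w) = (n : ℝ) * Nm w := by
      rw [hNmsmul]; simp
    have hneg : Nm (-(v : Fin d → ℂ)) = Nm v := by
      have : (-v : Fin d → ℂ) = (-1 : ℂ) • v := by funext i; simp
      rw [this, hNmsmul]; simp
    have h2' : Nm ((n : ℂ) • w) ≤ Nm (v + (n : ℂ) • w) + Nm v := by
      have := hNmadd (v + (n : ℂ) • w) (-v)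
      rw [hneg] at this
      have heq : v + (n : ℂ) • w + -v = (n : ℂ) • w := by abel
      rw [heq] at this
      exact this
    have h3 : Nm (v + (n : ℂ) • w) ≤ Nm v := by
      rw [← hpow n]; exact hNpow n
    rw [h1] at h2'
    linarith
  obtain ⟨n, hn⟩ := exists_nat_gt (2 * Nm v / Nm w)
  have := hbound n
  rw [div_lt_iff₀ hwpos] at hn
  linarith

include hNm0 hNmadd hNmsmul hcontr in
lemma ker_g_pow (hfix : M.mulVec ψS = ψS) (k : ℕ) (hk : 1 ≤ k) :
    LinearMap.ker ((M - 1).mulVecLin ^ k) = LinearMap.ker (M - 1).mulVecLin := by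
  set g := (M - 1).mulVecLin with hg
  have h12 : LinearMap.ker (g ^ 1) = LinearMap.ker (g ^ (1 : ℕ).succ) := by
    apply le_antisymm
    · intro x hx
      simp only [LinearMap.mem_ker, pow_one] at hx
      simp only [LinearMap.mem_ker, pow_succ, pow_one, Module.End.mul_apply, hx, map_zero]
    · intro x hx
      simp only [LinearMap.mem_ker, pow_succ, pow_one, Module.End.mul_apply] at hx
      simp only [LinearMap.mem_ker, pow_one]
      exact ker_g_sq M ψS Nm hNm0 hNmadd hNmsmul hcontr hfix x hx
  obtain ⟨m, rfl⟩ := Nat.exists_eq_add_of_le hk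
  rw [← Module.End.ker_pow_constant h12 m, pow_one]

include hNm0 hNmadd hNmsmul hcontr in
lemma range_g_pow (hfix : M.mulVec ψS = ψS) (k : ℕ) (hk : 1 ≤ k) :
    LinearMap.range ((M - 1).mulVecLin ^ k) = LinearMap.range (M - 1).mulVecLin := by
  apply Submodule.eq_of_le_of_finrank_le
  · obtain ⟨m, rfl⟩ := Nat.exists_eq_add_of_le hk
    rw [add_comm]
    intro x hx
    obtain ⟨y, hy⟩ := hx
    rw [pow_succ', Module.End.mul_apply] at hy
    exact ⟨(M - 1).mulVecLin ^ m <| y, hy⟩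
  · have h1 := LinearMap.finrank_range_add_finrank_ker ((M - 1).mulVecLin ^ k)
    have h2 := LinearMap.finrank_range_add_finrank_ker (M - 1).mulVecLin
    rw [ker_g_pow M ψS Nm hNm0 hNmadd hNmsmul hcontr hfix k hk] at h1
    omega

include hNm0 hNmadd hNmsmul hcontr in
lemma isCompl_g (hfix : M.mulVec ψS = ψS) (hd : 1 ≤ d) :
    IsCompl (LinearMap.ker ((M - 1) ^ d).mulVecLin)
      (LinearMap.range ((M - 1) ^ d).mulVecLin) := by
  rw [mulVecLin_pow, ker_g_pow M ψS Nm hNm0 hNmadd hNmsmul hcontr hfix d hd,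
    range_g_pow M ψS Nm hNm0 hNmadd hNmsmul hcontr hfix d hd]
  set g := (M - 1).mulVecLin with hg
  have hdisj : Disjoint (LinearMap.ker g) (LinearMap.range g) := by
    rw [Submodule.disjoint_def]
    rintro x hx ⟨y, rfl⟩
    have : g (g y) = 0 := hx
    have h0 : g y = 0 := ker_g_sq M ψS Nm hNm0 hNmadd hNmsmul hcontr hfix y this
    exact h0
  refine ⟨hdisj, ?_⟩
  rw [codisjoint_iff]
  apply Submodule.eq_top_of_finrank_eq
  have hsum := Submodule.finrank_sup_add_finrank_inf_eq (LinearMap.ker g) (LinearMap.range g)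
  have hinf : LinearMap.ker g ⊓ LinearMap.range g = ⊥ := disjoint_iff.mp hdisj
  rw [hinf, finrank_bot] at hsum
  have h2 := LinearMap.finrank_range_add_finrank_ker g
  omega

end Contr

section Proj

variable {d : ℕ} (M : Matrix (Fin d) (Fin d) ℂ) (ψS : Fin d → ℂ)
  (Nm : (Fin d → ℂ) → ℝ)
  (hNm0 : ∀ x, Nm x = 0 ↔ x = 0)
  (hNmadd : ∀ x y, Nm (x + y) ≤ Nm x + Nm y)
  (hNmsmul : ∀ (c : ℂ) (x : Fin d → ℂ), Nm (c • x) = ‖c‖ * Nm x)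
  (hcontr : ∀ x, Nm (M.mulVec x) ≤ Nm x)

include hNm0 hNmadd hNmsmul hcontr in
lemma specProj_props (hfix : M.mulVec ψS = ψS) (hd : 1 ≤ d) :
    (specProj M).mulVec ψS = ψS ∧ specProj M * M = specProj M := by
  have hcpl := isCompl_g M ψS Nm hNm0 hNmadd hNmsmul hcontr hfix hd
  set K := LinearMap.ker ((M - 1) ^ d).mulVecLin with hK
  have hP : ∀ x, (specProj M).mulVec x =
      (K.subtype ∘ₗ Submodule.linearProjOfIsCompl _ _ hcpl) x := by
    intro x
    rw [specProj, dif_pos hcpl, ← Matrix.toLin'_apply, Matrix.toLin'_toMatrix']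
  have hgS : (M - 1).mulVecLin ψS = 0 := by
    simp [Matrix.mulVecLin_apply, Matrix.sub_mulVec, Matrix.one_mulVec, hfix]
  constructor
  · have hmem : ψS ∈ K := by
      rw [hK, mulVecLin_pow, ker_g_pow M ψS Nm hNm0 hNmadd hNmsmul hcontr hfix d hd]
      exact hgS
    rw [hP ψS, LinearMap.comp_apply]
    have := Submodule.linearProjOfIsCompl_apply_left hcpl ⟨ψS, hmem⟩
    rw [Submodule.coe_subtype]
    exact congrArg Subtype.val this
  · have key : ∀ x, (specProj M).mulVec (M.mulVec x) = (specProj M).mulVec x := by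
      intro x
      have hMx : M.mulVec x = x + (M - 1).mulVecLin x := by
        simp [Matrix.mulVecLin_apply, Matrix.sub_mulVec, Matrix.one_mulVec]
      have hmem : (M - 1).mulVecLin x ∈ LinearMap.range ((M - 1) ^ d).mulVecLin := by
        rw [mulVecLin_pow, range_g_pow M ψS Nm hNm0 hNmadd hNmsmul hcontr hfix d hd]
        exact ⟨x, rfl⟩
      rw [hMx, hP, hP x, map_add]
      have h0 : (K.subtype ∘ₗ Submodule.linearProjOfIsCompl _ _ hcpl)
          ((M - 1).mulVecLin x) = 0 := by
        rw [LinearMap.comp_apply,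
          show Submodule.linearProjOfIsCompl _ _ hcpl ((M - 1).mulVecLin x) = 0 from
            Submodule.projectionOnto_apply_of_mem_right hcpl hmem]
        rfl
      rw [h0, add_zero]
    have hcols : ∀ x, (specProj M * M).mulVec x = (specProj M).mulVec x := by
      intro x
      rw [← Matrix.mulVec_mulVec]
      exact key x
    have hT : (specProj M * M)ᵀ = (specProj M)ᵀ := by
      funext jj
      change (specProj M * M).col jj = (specProj M).col jj
      rw [← Matrix.mulVec_single_one, ← Matrix.mulVec_single_one, hcols]
    calc specProj M * M = ((specProj M * M)ᵀ)ᵀ := by rw [Matrix.transpose_transpose]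
      _ = ((specProj M)ᵀ)ᵀ := by rw [hT]
      _ = specProj M := Matrix.transpose_transpose _

include hNm0 hNmadd hNmsmul hcontr in
lemma psiv_fixed (hfix : M.mulVec ψS = ψS) (hd : 1 ≤ d) :
    Mᴴ.mulVec (psiv ψS M) = psiv ψS M := by
  rw [psiv, Matrix.mulVec_mulVec, ← Matrix.conjTranspose_mul,
    (specProj_props M ψS Nm hNm0 hNmadd hNmsmul hcontr hfix hd).2]

include hNm0 hNmadd hNmsmul hcontr in
lemma einner_psiv (hψS : evnorm ψS = 1) (hfix : M.mulVec ψS = ψS) (hd : 1 ≤ d) :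
    einner ψS (psiv ψS M) = 1 := by
  rw [psiv, einner_adj,
    (specProj_props M ψS Nm hNm0 hNmadd hNmsmul hcontr hfix hd).1]
  rw [einner]
  have h1 : ∀ i, starRingEnd ℂ (ψS i) * ψS i = ((‖ψS i‖ ^ 2 : ℝ) : ℂ) := by
    intro i
    rw [mul_comm, Complex.mul_conj]
    norm_cast
    rw [Complex.normSq_eq_norm_sq]
  rw [Finset.sum_congr rfl fun i _ => h1 i, ← Complex.ofReal_sum]
  have h0 : (0:ℝ) ≤ ∑ i, ‖ψS i‖ ^ 2 := Finset.sum_nonneg fun i _ => sq_nonneg _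
  have h2 : (∑ i, ‖ψS i‖ ^ 2) = 1 := by
    have := hψS
    rw [evnorm, Real.sqrt_eq_one] at this
    exact this
  rw [h2]
  norm_num

lemma einner_sub (φ x y : Fin d → ℂ) : einner φ (x - y) = einner φ x - einner φ y := by
  simp [einner, Pi.sub_apply, mul_sub, Finset.sum_sub_distrib]

include hNm0 hNmadd hNmsmul hcontr in
lemma step_lemma (hψS : evnorm ψS = 1) (hfix : M.mulVec ψS = ψS) (hd : 1 ≤ d)
    (x : Fin d → ℂ) (hx : einner ψS x = 1) :
    (MQm ψS M)ᴴ.mulVec x = Mᴴ.mulVec x - psiv ψS M := by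
  set ψA := psiv ψS M with hψA
  have hQ : ∀ y, ((1 : Matrix (Fin d) (Fin d) ℂ) - ketbra ψS ψA)ᴴ.mulVec y
      = y - einner ψS y • ψA := by
    intro y
    rw [Matrix.conjTranspose_sub, Matrix.conjTranspose_one, conjTranspose_ketbra,
      Matrix.sub_mulVec, Matrix.one_mulVec, ketbra_mulVec]
  have hMadj : ∀ y, einner ψS (Mᴴ.mulVec y) = einner ψS y := by
    intro y; rw [einner_adj, hfix]
  rw [MQm, Matrix.conjTranspose_mul, Matrix.conjTranspose_mul, ← Matrix.mulVec_mulVec,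
    ← Matrix.mulVec_mulVec, hQ x, hx, one_smul, Matrix.mulVec_sub,
    psiv_fixed M ψS Nm hNm0 hNmadd hNmsmul hcontr hfix hd, hQ, einner_sub, hMadj, hx,
    einner_psiv M ψS Nm hNm0 hNmadd hNmsmul hcontr hψS hfix hd]
  rw [sub_self, zero_smul, sub_zero]

end Proj

section Main

variable {d : ℕ}

lemma einner_fwd (ψS : Fin d → ℂ) (Ms : ℕ → Matrix (Fin d) (Fin d) ℂ)
    (hfix : ∀ i, (Ms i).mulVec ψS = ψS) (n : ℕ) (y : Fin d → ℂ) :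
    einner ψS ((((List.range n).map fun i => (Ms i)ᴴ).prod).mulVec y) = einner ψS y := by
  induction n generalizing y with
  | zero => simp [Matrix.one_mulVec]
  | succ n ih =>
      rw [List.range_succ, List.map_append, List.prod_append]
      simp only [List.map_cons, List.map_nil, List.prod_cons, List.prod_nil, mul_one]
      rw [← Matrix.mulVec_mulVec, ih, einner_adj, hfix n]

end Main


theorem stmt5
    {d : ℕ} (Mf : ℕ → Matrix (Fin d) (Fin d) ℂ)
    (ψS : Fin d → ℂ) (hψS : evnorm ψS = 1)
    (Nm : (Fin d → ℂ) → ℝ)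
    (hNm0 : ∀ x, Nm x = 0 ↔ x = 0)
    (hNmadd : ∀ x y, Nm (x + y) ≤ Nm x + Nm y)
    (hNmsmul : ∀ (c : ℂ) (x : Fin d → ℂ), Nm (c • x) = ‖c‖ * Nm x)
    (hcontr : ∀ j x, Nm ((Mf j).mulVec x) ≤ Nm x)
    (hfix : ∀ j, (Mf j).mulVec ψS = ψS)
    :
    ∀ (j : ℕ → ℕ) (n : ℕ),
      ∑ k ∈ Finset.range (n + 1),
          (((List.range k).map fun i => (MQm ψS (Mf (j i)))ᴴ).prod).mulVec
            (psiv ψS (Mf (j k)))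
        = (((List.range n).map fun i => (Mf (j i))ᴴ).prod).mulVec (psiv ψS (Mf (j n))) := by
  intro j n
  rcases Nat.eq_zero_or_pos d with hd0 | hd
  · subst hd0
    exact funext fun i => i.elim0
  induction n generalizing j with
  | zero => simp [Matrix.one_mulVec]
  | succ n ih =>
      set j' : ℕ → ℕ := fun i => j (i + 1) with hj'
      set v : Fin d → ℂ :=
        (((List.range n).map fun i => (Mf (j' i))ᴴ).prod).mulVec (psiv ψS (Mf (j' n)))
        with hv
      have hrw : ∀ k : ℕ,
          (((List.range (k + 1)).map fun i => (MQm ψS (Mf (j i)))ᴴ).prod).mulVec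
              (psiv ψS (Mf (j (k + 1))))
          = (MQm ψS (Mf (j 0)))ᴴ.mulVec
              ((((List.range k).map fun i => (MQm ψS (Mf (j' i)))ᴴ).prod).mulVec
                (psiv ψS (Mf (j' k)))) := by
        intro k
        rw [List.range_succ_eq_map, List.map_cons, List.prod_cons, List.map_map,
          ← Matrix.mulVec_mulVec]
        rfl
      rw [Finset.sum_range_succ']
      simp only [hrw]
      have hsum := (map_sum ((MQm ψS (Mf (j 0)))ᴴ).mulVecLin
        (fun k => (((List.range k).map fun i => (MQm ψS (Mf (j' i)))ᴴ).prod).mulVec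
          (psiv ψS (Mf (j' k)))) (Finset.range (n + 1))).symm
      simp only [Matrix.mulVecLin_apply] at hsum
      rw [hsum, ih j']
      have hv1 : einner ψS v = 1 := by
        rw [hv, einner_fwd ψS (fun i => Mf (j' i)) (fun i => hfix (j' i)) n]
        exact einner_psiv (Mf (j' n)) ψS Nm hNm0 hNmadd hNmsmul (hcontr (j' n)) hψS
          (hfix (j' n)) hd
      rw [show (((List.range n).map fun i => (Mf (j' i))ᴴ).prod).mulVec (psiv ψS (Mf (j' n)))
          = v from rfl]
      rw [step_lemma (Mf (j 0)) ψS Nm hNm0 hNmadd hNmsmul (hcontr (j 0)) hψS (hfix (j 0))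
        hd v hv1]
      simp only [List.range_zero, List.map_nil, List.prod_nil, Matrix.one_mulVec]
      rw [sub_add_cancel]
      rw [List.range_succ_eq_map, List.map_cons, List.prod_cons, List.map_map,
        ← Matrix.mulVec_mulVec]
      rfl

end RRDO
end

section
/- Let M : Ω → (d×d complex matrices) be a random reduced dynamics operator, and suppose p({ω : M(ω) ∈ M_(E)}) > 0. Then there exists a d×d complex matrix M₀ ∈ M_(E) with |||M₀ x||| ≤ |||x||| for all x and M₀ ψ_S = ψ_S, such that for every ε > 0, p({ω : ‖M(ω) − M₀‖ < ε}) > 0. -/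
open MeasureTheory Filter Matrix
open scoped BigOperators

namespace RRDO

lemma opNorm_le_of_entries {d : ℕ} (A : Matrix (Fin d) (Fin d) ℂ) {c : ℝ} (hc : 0 ≤ c)
    (h : ∀ i j, ‖A i j‖ ≤ c) : opNorm A ≤ ((d : ℝ) * d) * c := by
  have hne : Nonempty {v : Fin d → ℂ // evnorm v ≤ 1} := ⟨⟨0, by simp [evnorm]⟩⟩
  refine ciSup_le fun ⟨v, hv⟩ => ?_
  have hv1 : ∀ j, ‖v j‖ ≤ 1 := by
    intro j
    have h2 : ‖v j‖ ^ 2 ≤ ∑ i, ‖v i‖ ^ 2 :=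
      Finset.single_le_sum (f := fun i => ‖v i‖ ^ 2) (fun i _ => sq_nonneg _) (Finset.mem_univ j)
    calc ‖v j‖ = Real.sqrt (‖v j‖ ^ 2) := (Real.sqrt_sq (norm_nonneg _)).symm
      _ ≤ Real.sqrt (∑ i, ‖v i‖ ^ 2) := Real.sqrt_le_sqrt h2
      _ ≤ 1 := hv
  have hrow : ∀ i, ‖A.mulVec v i‖ ≤ (d : ℝ) * c := by
    intro i
    calc ‖∑ j, A i j * v j‖ ≤ ∑ j, ‖A i j * v j‖ := norm_sum_le _ _
      _ ≤ ∑ _j : Fin d, c := by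
          refine Finset.sum_le_sum fun j _ => ?_
          rw [norm_mul]
          calc ‖A i j‖ * ‖v j‖ ≤ c * 1 :=
                mul_le_mul (h i j) (hv1 j) (norm_nonneg _) hc
            _ = c := mul_one c
      _ = (d : ℝ) * c := by simp [mul_comm]
  have key : ∑ i, ‖A.mulVec v i‖ ^ 2 ≤ (((d : ℝ) * d) * c) ^ 2 := by
    calc ∑ i, ‖A.mulVec v i‖ ^ 2 ≤ ∑ _i : Fin d, ((d : ℝ) * c) ^ 2 := by
          refine Finset.sum_le_sum fun i _ => ?_
          exact pow_le_pow_left₀ (norm_nonneg _) (hrow i) 2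
      _ = (d : ℝ) * ((d : ℝ) * c) ^ 2 := by simp [mul_comm]
      _ ≤ (((d : ℝ) * d) * c) ^ 2 := by
          rcases Nat.eq_zero_or_pos d with h0 | h0
          · simp [h0]
          · have h1 : (1:ℝ) ≤ (d:ℝ) := by exact_mod_cast h0
            nlinarith [sq_nonneg c]
  calc evnorm (A.mulVec v) ≤ Real.sqrt ((((d : ℝ) * d) * c) ^ 2) := Real.sqrt_le_sqrt key
    _ = ((d : ℝ) * d) * c := Real.sqrt_sq (by positivity)

theorem stmt9
    {Ω : Type} [MeasurableSpace Ω] (p : Measure Ω) [IsProbabilityMeasure p]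
    {d : ℕ} (M : Ω → Matrix (Fin d) (Fin d) ℂ)
    (hMmeas : ∀ i j, Measurable fun ω => M ω i j)
    (ψS : Fin d → ℂ) (hψS : evnorm ψS = 1)
    (Nm : (Fin d → ℂ) → ℝ)
    (hNm0 : ∀ x, Nm x = 0 ↔ x = 0)
    (hNmadd : ∀ x y, Nm (x + y) ≤ Nm x + Nm y)
    (hNmsmul : ∀ (c : ℂ) (x : Fin d → ℂ), Nm (c • x) = ‖c‖ * Nm x)
    (hcontr : ∀ ω x, Nm ((M ω).mulVec x) ≤ Nm x)
    (hfix : ∀ ω, (M ω).mulVec ψS = ψS)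
    (hpos : 0 < p {ω | M ω ∈ MsetE d})
    :
    ∃ M₀ : Matrix (Fin d) (Fin d) ℂ, M₀ ∈ MsetE d ∧
      (∀ x, Nm (M₀.mulVec x) ≤ Nm x) ∧ M₀.mulVec ψS = ψS ∧
      ∀ ε : ℝ, 0 < ε → 0 < p {ω | opNorm (M ω - M₀) < ε} := by
  classical
  set S := {ω | M ω ∈ MsetE d} with hSdef
  set f : Ω → (Fin d → Fin d → ℂ) := fun ω i j => M ω i j with hfdef
  have hfmeas : Measurable f :=
    measurable_pi_lambda _ fun i => measurable_pi_lambda _ fun j => hMmeas i j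
  set ν := Measure.map f (p.restrict S) with hνdef
  set T := {y : Fin d → Fin d → ℂ | ∃ u ∈ nhds y, ν u = 0} with hTdef
  have hTopen : IsOpen T := by
    rw [isOpen_iff_mem_nhds]
    rintro y ⟨u, hu, hu0⟩
    refine Filter.mem_of_superset (interior_mem_nhds.2 hu) fun z hz => ?_
    exact ⟨u, mem_interior_iff_mem_nhds.1 hz, hu0⟩
  have hνT : ν T = 0 := by
    refine measure_null_of_locally_null T fun x hx => ?_
    obtain ⟨u, hu, hu0⟩ := hx
    exact ⟨u, nhdsWithin_le_nhds hu, hu0⟩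
  have hpre : p (f ⁻¹' T ∩ S) = 0 := by
    rw [← Measure.restrict_apply (hfmeas hTopen.measurableSet),
      ← Measure.map_apply hfmeas hTopen.measurableSet]
    exact hνT
  have hdiff : (S \ f ⁻¹' T).Nonempty := by
    rw [Set.nonempty_iff_ne_empty]
    intro hempty
    have hsub : S ⊆ f ⁻¹' T := Set.diff_eq_empty.mp hempty
    have hle : p S ≤ p (f ⁻¹' T ∩ S) := measure_mono fun ω hω => ⟨hsub hω, hω⟩
    rw [hpre] at hle
    exact absurd (lt_of_lt_of_le hpos hle) (lt_irrefl 0)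
  obtain ⟨ω₀, hω₀S, hω₀T⟩ := hdiff
  refine ⟨M ω₀, hω₀S, fun x => hcontr ω₀ x, hfix ω₀, fun ε hε => ?_⟩
  set δ := ε / ((d : ℝ) * d + 1) with hδdef
  have hδpos : 0 < δ := by positivity
  have hball : ν (Metric.ball (f ω₀) δ) ≠ 0 := fun h0 =>
    hω₀T ⟨Metric.ball (f ω₀) δ, Metric.ball_mem_nhds _ hδpos, h0⟩
  have hsub : f ⁻¹' Metric.ball (f ω₀) δ ∩ S ⊆ {ω | opNorm (M ω - M ω₀) < ε} := by
    rintro ω ⟨hω, -⟩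
    have hdist : dist (f ω) (f ω₀) < δ := hω
    have hb : opNorm (M ω - M ω₀) ≤ ((d : ℝ) * d) * dist (f ω) (f ω₀) := by
      refine opNorm_le_of_entries _ dist_nonneg fun i j => ?_
      have h1 : dist (f ω i) (f ω₀ i) ≤ dist (f ω) (f ω₀) := dist_le_pi_dist _ _ i
      have h2 : dist (f ω i j) (f ω₀ i j) ≤ dist (f ω i) (f ω₀ i) := dist_le_pi_dist _ _ j
      have h3 : ‖(M ω - M ω₀) i j‖ = dist (f ω i j) (f ω₀ i j) := by
        rw [dist_eq_norm]; rfl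
      rw [h3]; exact h2.trans h1
    have hlt : ((d : ℝ) * d) * dist (f ω) (f ω₀) < ε := by
      have hd0 : (0:ℝ) ≤ (d : ℝ) * d := by positivity
      have h4 : ((d : ℝ) * d) * dist (f ω) (f ω₀) ≤ ((d : ℝ) * d) * δ :=
        mul_le_mul_of_nonneg_left hdist.le hd0
      have h5 : ((d : ℝ) * d) * δ < ((d : ℝ) * d + 1) * δ := by nlinarith
      have h6 : ((d : ℝ) * d + 1) * δ = ε := by
        rw [hδdef]; field_simp
      linarith
    exact lt_of_le_of_lt hb hlt
  have heq : p (f ⁻¹' Metric.ball (f ω₀) δ ∩ S) = ν (Metric.ball (f ω₀) δ) := by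
    rw [Measure.map_apply hfmeas Metric.isOpen_ball.measurableSet,
      Measure.restrict_apply (hfmeas Metric.isOpen_ball.measurableSet)]
  calc (0 : ENNReal) < ν (Metric.ball (f ω₀) δ) := pos_iff_ne_zero.mpr hball
    _ = p (f ⁻¹' Metric.ball (f ω₀) δ ∩ S) := heq.symm
    _ ≤ p {ω | opNorm (M ω - M ω₀) < ε} := measure_mono hsub


end RRDO
end
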